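/- Let 1 ≤ p < ∞ and let x₁, …, xₙ be finitely supported elements of the James space J_p whose supports (with respect to the canonical unit vectors) are contained in consecutive disjoint intervals of ℕ. Then ‖x₁ + ⋯ + xₙ‖_{J_p}^p ≤ (2^p + 1) · (‖x₁‖_{J_p}^p + ⋯ + ‖xₙ‖_{J_p}^p). -/

import Mathlib

open Filter

/-- The James `p`-variation "norm" of a sequence, as a value in `[0, ∞]`:
the supremum over all finite strictly increasing sequences `p₁ < ⋯ < pₙ` (of length `≥ 2`)
of `(∑ |x(p_{i+1}) - x(p_i)|^p)^(1/p)`. -/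
noncomputable def Jnorm (p : ℝ) (x : ℕ → ℝ) : ENNReal :=
  ⨆ (n : ℕ) (f : {g : Fin (n + 2) → ℕ // StrictMono g}),
    ENNReal.ofReal ((∑ i : Fin (n + 1), |x (f.1 i.succ) - x (f.1 i.castSucc)| ^ p) ^ (1 / p))

lemma jnorm_ge {p : ℝ} (hp : 1 ≤ p) (x : ℕ → ℝ) (N : ℕ) (f : Fin (N + 2) → ℕ)
    (hf : StrictMono f) :
    ENNReal.ofReal (∑ i : Fin (N + 1), |x (f i.succ) - x (f i.castSucc)| ^ p)
      ≤ Jnorm p x ^ p := by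
  have hp0 : (0 : ℝ) < p := lt_of_lt_of_le one_pos hp
  set t : ℝ := ∑ i : Fin (N + 1), |x (f i.succ) - x (f i.castSucc)| ^ p with ht_def
  have ht : 0 ≤ t := Finset.sum_nonneg fun i _ => Real.rpow_nonneg (abs_nonneg _) p
  have h1 : ENNReal.ofReal (t ^ (1 / p)) ≤ Jnorm p x :=
    le_iSup_of_le N (le_iSup_of_le ⟨f, hf⟩ le_rfl)
  calc ENNReal.ofReal t = ENNReal.ofReal t ^ ((1 / p) * p) := by
        rw [one_div_mul_cancel hp0.ne', ENNReal.rpow_one]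
    _ = (ENNReal.ofReal t ^ (1 / p)) ^ p := by rw [ENNReal.rpow_mul]
    _ = ENNReal.ofReal (t ^ (1 / p)) ^ p := by
        rw [ENNReal.ofReal_rpow_of_nonneg ht (by positivity)]
    _ ≤ Jnorm p x ^ p := ENNReal.rpow_le_rpow h1 hp0.le

lemma jnorm_single {p : ℝ} (hp : 1 ≤ p) (x : ℕ → ℝ) (k M : ℕ) (hkM : k < M) (hM : x M = 0) :
    ENNReal.ofReal (|x k| ^ p) ≤ Jnorm p x ^ p := by
  have hf : StrictMono (fun i : Fin 2 => if i.val = 0 then k else M) := by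
    intro i j hij
    fin_cases i <;> fin_cases j <;> simp_all
  have := jnorm_ge hp x 0 (fun i : Fin 2 => if i.val = 0 then k else M) hf
  simpa [Fin.sum_univ_one, hM, zero_sub, abs_neg] using this

theorem jnorm_consecutive_sum_le (p : ℝ) (hp : 1 ≤ p) (n : ℕ)
    (x : Fin n → ℕ → ℝ) (a b : Fin n → ℕ)
    (hab : ∀ i, a i ≤ b i)
    (hconsec : ∀ i j : Fin n, i < j → b i < a j)
    (hsupp : ∀ i k, x i k ≠ 0 → a i ≤ k ∧ k ≤ b i) :
    Jnorm p (fun k => ∑ i, x i k) ^ p ≤ ((2 : ENNReal) ^ p + 1) * ∑ i, Jnorm p (x i) ^ p := by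
  have hp0 : (0 : ℝ) < p := lt_of_lt_of_le one_pos hp
  rcases Nat.eq_zero_or_pos n with hn | hn
  · subst hn
    have hJ : Jnorm p (fun k => ∑ i : Fin 0, x i k) = 0 := by
      refine le_antisymm ?_ zero_le
      refine iSup_le fun N => iSup_le fun f => ?_
      simp [Real.zero_rpow hp0.ne', one_div, Real.zero_rpow (inv_ne_zero hp0.ne')]
    rw [hJ, ENNReal.zero_rpow_of_pos hp0]
    exact zero_le
  -- n ≥ 1
  classical
  set S : ℕ → ℝ := fun k => ∑ i, x i k with hS_def
  set c : ℕ → Fin n := fun k =>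
    ⟨(Finset.univ.filter fun j : Fin n => a j ≤ k).sup (fun j => j.val), by
      rcases (Finset.univ.filter fun j : Fin n => a j ≤ k).eq_empty_or_nonempty with h | h
      · simpa [h] using hn
      · exact (Finset.sup_lt_iff (by simpa using hn)).2 fun j _ => j.isLt⟩ with hc_def
  have hcmono : Monotone c := by
    intro k k' hkk'
    have hsub : (Finset.univ.filter fun j : Fin n => a j ≤ k)
        ⊆ (Finset.univ.filter fun j : Fin n => a j ≤ k') := by
      intro j hj
      simp only [Finset.mem_filter, Finset.mem_univ, true_and] at hj ⊢
      omega
    have h := Finset.sup_mono (f := fun j : Fin n => j.val) hsub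
    rw [Fin.le_def]
    exact h
  have hcx : ∀ (j : Fin n) (k : ℕ), x j k ≠ 0 → c k = j := by
    intro j k hx
    obtain ⟨hak, hkb⟩ := hsupp j k hx
    apply Fin.ext
    have hval : (c k).val = (Finset.univ.filter fun j : Fin n => a j ≤ k).sup (fun j => j.val) :=
      rfl
    rw [hval]
    refine le_antisymm (Finset.sup_le fun j' hj' => ?_) ?_
    · simp only [Finset.mem_filter, Finset.mem_univ, true_and] at hj'
      by_contra hlt
      push_neg at hlt
      have : j < j' := by
        rw [Fin.lt_def]; exact hlt
      have := hconsec j j' this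
      omega
    · exact Finset.le_sup (f := fun j : Fin n => j.val)
        (by simp only [Finset.mem_filter, Finset.mem_univ, true_and]; exact hak)
  have hS : ∀ k, S k = x (c k) k := by
    intro k
    refine Finset.sum_eq_single_of_mem (c k) (Finset.mem_univ _) fun j _ hj => ?_
    by_contra h
    exact hj (hcx j k h).symm
  have hpoint : ∀ (j : Fin n) (k : ℕ), ENNReal.ofReal (|x j k| ^ p) ≤ Jnorm p (x j) ^ p := by
    intro j k
    refine jnorm_single hp (x j) k (max k (b j) + 1) (by omega) ?_
    by_contra h
    have := (hsupp j _ h).2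
    omega
  set T : ENNReal := ∑ i, Jnorm p (x i) ^ p with hT_def
  -- key estimate for each finite increasing sequence
  have key : ∀ (N : ℕ) (f : Fin (N + 2) → ℕ), StrictMono f →
      ENNReal.ofReal (∑ i : Fin (N + 1), |S (f i.succ) - S (f i.castSucc)| ^ p)
        ≤ ((2 : ENNReal) ^ p + 1) * T := by
    intro N f hf
    set d : Fin (N + 2) → Fin n := fun i => c (f i) with hd_def
    have hd : Monotone d := hcmono.comp hf.monotone
    set t : Fin (N + 1) → ENNReal := fun i =>
      ENNReal.ofReal (|x (d i.succ) (f i.succ) - x (d i.castSucc) (f i.castSucc)| ^ p)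
      with ht_def
    have hterm : ENNReal.ofReal (∑ i : Fin (N + 1), |S (f i.succ) - S (f i.castSucc)| ^ p)
        = ∑ i : Fin (N + 1), t i := by
      rw [ENNReal.ofReal_sum_of_nonneg fun i _ => Real.rpow_nonneg (abs_nonneg _) p]
      refine Finset.sum_congr rfl fun i _ => ?_
      rw [ht_def, hS (f i.succ), hS (f i.castSucc)]
    rw [hterm]
    set A : Finset (Fin (N + 1)) := Finset.univ.filter fun i => d i.castSucc = d i.succ with hA
    have hsplit : ∑ i : Fin (N + 1), t i
        = ∑ i ∈ A, t i + ∑ i ∈ Finset.univ.filter (fun i => ¬ d i.castSucc = d i.succ), t i :=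
      (Finset.sum_filter_add_sum_filter_not _ _ _).symm
    -- within-block bound
    have hwithin : ∑ i ∈ A, t i ≤ T := by
      have hfib : ∑ i ∈ A, t i
          = ∑ j : Fin n, ∑ i ∈ A.filter (fun i => d i.castSucc = j), t i :=
        (Finset.sum_fiberwise_of_maps_to (fun i _ => Finset.mem_univ _) t).symm
      rw [hfib, hT_def]
      refine Finset.sum_le_sum fun j _ => ?_
      set Aj := A.filter (fun i => d i.castSucc = j) with hAj
      have hmemAj : ∀ i, i ∈ Aj ↔ (d i.castSucc = j ∧ d i.succ = j) := by
        intro i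
        simp only [hAj, hA, Finset.mem_filter, Finset.mem_univ, true_and]
        constructor
        · rintro ⟨h1, h2⟩
          exact ⟨h2, h1 ▸ h2⟩
        · rintro ⟨h1, h2⟩
          exact ⟨h1.trans h2.symm, h1⟩
      rcases Aj.eq_empty_or_nonempty with hAjE | hAjNE
      · simp [hAjE]
      set l := Aj.min' hAjNE with hl_def
      set u := Aj.max' hAjNE with hu_def
      have hl : l ∈ Aj := Finset.min'_mem _ _
      have hu : u ∈ Aj := Finset.max'_mem _ _
      have hlu : (l : ℕ) ≤ (u : ℕ) := Finset.min'_le _ _ hu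
      have huN : (u : ℕ) < N + 1 := u.isLt
      set m := (u : ℕ) - (l : ℕ) with hm
      have hmem2 : ∀ i ∈ Aj, (l : ℕ) ≤ (i : ℕ) ∧ (i : ℕ) ≤ (u : ℕ) := fun i hi =>
        ⟨Finset.min'_le _ _ hi, Finset.le_max' _ _ hi⟩
      set g : Fin (m + 2) → ℕ := fun i =>
        f ⟨(l : ℕ) + i.val, by have := i.isLt; omega⟩ with hg_def
      have hgmono : StrictMono g := by
        intro i1 i2 h12
        apply hf
        rw [Fin.mk_lt_mk]
        exact Nat.add_lt_add_left h12 _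
      set term : Fin (m + 1) → ENNReal := fun i' =>
        ENNReal.ofReal (|x j (g i'.succ) - x j (g i'.castSucc)| ^ p) with hterm_def
      set e : Fin (N + 1) → Fin (m + 1) := fun i =>
        ⟨min ((i : ℕ) - (l : ℕ)) m, by omega⟩ with he_def
      have he_eq : ∀ i ∈ Aj, t i = term (e i) := by
        intro i hi
        obtain ⟨hli, hiu⟩ := hmem2 i hi
        obtain ⟨hd1, hd2⟩ := (hmemAj i).1 hi
        have h1 : g (e i).succ = f i.succ := by
          apply congrArg f
          apply Fin.ext
          simp only [hg_def, he_def, Fin.val_succ, Fin.succ_mk]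
          omega
        have h2 : g (e i).castSucc = f i.castSucc := by
          apply congrArg f
          apply Fin.ext
          simp only [hg_def, he_def, Fin.coe_castSucc, Fin.castSucc_mk]
          omega
        rw [ht_def, hterm_def]
        simp only
        rw [h1, h2, hd1, hd2]
      have he_inj : ∀ i1 ∈ Aj, ∀ i2 ∈ Aj, e i1 = e i2 → i1 = i2 := by
        intro i1 h1 i2 h2 hee
        obtain ⟨ha1, hb1⟩ := hmem2 i1 h1
        obtain ⟨ha2, hb2⟩ := hmem2 i2 h2
        have : ((e i1 : Fin (m+1)) : ℕ) = ((e i2 : Fin (m+1)) : ℕ) := by rw [hee]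
        simp only [he_def] at this
        apply Fin.ext
        omega
      calc ∑ i ∈ Aj, t i = ∑ i ∈ Aj, term (e i) := Finset.sum_congr rfl he_eq
        _ = ∑ i' ∈ Aj.image e, term i' := (Finset.sum_image he_inj).symm
        _ ≤ ∑ i' : Fin (m + 1), term i' :=
            Finset.sum_le_sum_of_subset (Finset.subset_univ _)
        _ = ENNReal.ofReal (∑ i' : Fin (m + 1), |x j (g i'.succ) - x j (g i'.castSucc)| ^ p) :=
            (ENNReal.ofReal_sum_of_nonneg fun i _ => Real.rpow_nonneg (abs_nonneg _) p).symm
        _ ≤ Jnorm p (x j) ^ p := jnorm_ge hp (x j) m g hgmono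
    -- crossing bound
    have hcross : ∑ i ∈ Finset.univ.filter (fun i => ¬ d i.castSucc = d i.succ), t i
        ≤ (2 : ENNReal) ^ p * T := by
      set B := Finset.univ.filter (fun i : Fin (N+1) => ¬ d i.castSucc = d i.succ) with hB
      have hbound : ∀ i ∈ B, t i ≤ (2 : ENNReal) ^ (p - 1) *
          (Jnorm p (x (d i.castSucc)) ^ p + Jnorm p (x (d i.succ)) ^ p) := by
        intro i _
        have habs : |x (d i.succ) (f i.succ) - x (d i.castSucc) (f i.castSucc)|
            ≤ |x (d i.castSucc) (f i.castSucc)| + |x (d i.succ) (f i.succ)| :=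
          (abs_sub _ _).trans (le_of_eq (add_comm _ _))
        calc t i = ENNReal.ofReal
              (|x (d i.succ) (f i.succ) - x (d i.castSucc) (f i.castSucc)| ^ p) := rfl
          _ = ENNReal.ofReal
              (|x (d i.succ) (f i.succ) - x (d i.castSucc) (f i.castSucc)|) ^ p := by
              rw [ENNReal.ofReal_rpow_of_nonneg (abs_nonneg _) hp0.le]
          _ ≤ (ENNReal.ofReal (|x (d i.castSucc) (f i.castSucc)|)
              + ENNReal.ofReal (|x (d i.succ) (f i.succ)|)) ^ p := by
              rw [← ENNReal.ofReal_add (abs_nonneg _) (abs_nonneg _)]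
              exact ENNReal.rpow_le_rpow (ENNReal.ofReal_le_ofReal habs) hp0.le
          _ ≤ (2 : ENNReal) ^ (p - 1) *
              (ENNReal.ofReal (|x (d i.castSucc) (f i.castSucc)|) ^ p
                + ENNReal.ofReal (|x (d i.succ) (f i.succ)|) ^ p) :=
              ENNReal.rpow_add_le_mul_rpow_add_rpow _ _ hp
          _ ≤ (2 : ENNReal) ^ (p - 1) *
              (Jnorm p (x (d i.castSucc)) ^ p + Jnorm p (x (d i.succ)) ^ p) := by
              refine mul_le_mul_right (add_le_add ?_ ?_) _
              · rw [ENNReal.ofReal_rpow_of_nonneg (abs_nonneg _) hp0.le]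
                exact hpoint _ _
              · rw [ENNReal.ofReal_rpow_of_nonneg (abs_nonneg _) hp0.le]
                exact hpoint _ _
      have hBlt : ∀ i ∈ B, d i.castSucc < d i.succ := by
        intro i hi
        simp only [hB, Finset.mem_filter, Finset.mem_univ, true_and] at hi
        exact lt_of_le_of_ne (hd (Fin.castSucc_lt_succ (i := i)).le) hi
      have horder : ∀ i1 i2 : Fin (N + 1), i1 < i2 → (i1.succ : Fin (N+2)) ≤ i2.castSucc := by
        intro i1 i2 h12
        rw [Fin.le_def]
        simp only [Fin.val_succ, Fin.coe_castSucc]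
        exact h12
      have hinj1 : ∀ i1 ∈ B, ∀ i2 ∈ B, d i1.castSucc = d i2.castSucc → i1 = i2 := by
        intro i1 h1 i2 h2 hee
        by_contra hne
        rcases lt_or_gt_of_ne hne with hlt | hlt
        · exact absurd hee (ne_of_lt ((hBlt i1 h1).trans_le (hd (horder _ _ hlt))))
        · exact absurd hee.symm (ne_of_lt ((hBlt i2 h2).trans_le (hd (horder _ _ hlt))))
      have hinj2 : ∀ i1 ∈ B, ∀ i2 ∈ B, d i1.succ = d i2.succ → i1 = i2 := by
        intro i1 h1 i2 h2 hee
        by_contra hne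
        rcases lt_or_gt_of_ne hne with hlt | hlt
        · exact absurd hee (ne_of_lt (lt_of_le_of_lt (hd (horder _ _ hlt)) (hBlt i2 h2)))
        · exact absurd hee.symm (ne_of_lt (lt_of_le_of_lt (hd (horder _ _ hlt)) (hBlt i1 h1)))
      have hsum1 : ∑ i ∈ B, Jnorm p (x (d i.castSucc)) ^ p ≤ T := by
        rw [hT_def]
        calc ∑ i ∈ B, Jnorm p (x (d i.castSucc)) ^ p
            = ∑ j ∈ B.image (fun i => d i.castSucc), Jnorm p (x j) ^ p :=
              (Finset.sum_image (f := fun j => Jnorm p (x j) ^ p) hinj1).symm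
          _ ≤ ∑ j : Fin n, Jnorm p (x j) ^ p :=
              Finset.sum_le_sum_of_subset (Finset.subset_univ _)
      have hsum2 : ∑ i ∈ B, Jnorm p (x (d i.succ)) ^ p ≤ T := by
        rw [hT_def]
        calc ∑ i ∈ B, Jnorm p (x (d i.succ)) ^ p
            = ∑ j ∈ B.image (fun i => d i.succ), Jnorm p (x j) ^ p :=
              (Finset.sum_image (f := fun j => Jnorm p (x j) ^ p) hinj2).symm
          _ ≤ ∑ j : Fin n, Jnorm p (x j) ^ p :=
              Finset.sum_le_sum_of_subset (Finset.subset_univ _)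
      have h2p : (2 : ENNReal) ^ (p - 1) * (T + T) = (2 : ENNReal) ^ p * T := by
        rw [← two_mul, ← mul_assoc]
        congr 1
        calc (2 : ENNReal) ^ (p - 1) * 2
            = (2 : ENNReal) ^ (p - 1) * (2 : ENNReal) ^ (1 : ℝ) := by
              rw [ENNReal.rpow_one]
          _ = (2 : ENNReal) ^ (p - 1 + 1) :=
              (ENNReal.rpow_add _ _ two_ne_zero ENNReal.ofNat_ne_top).symm
          _ = (2 : ENNReal) ^ p := by
              congr 1
              ring
      calc ∑ i ∈ B, t i
          ≤ ∑ i ∈ B, (2 : ENNReal) ^ (p - 1) *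
            (Jnorm p (x (d i.castSucc)) ^ p + Jnorm p (x (d i.succ)) ^ p) :=
            Finset.sum_le_sum hbound
        _ = (2 : ENNReal) ^ (p - 1) * (∑ i ∈ B, Jnorm p (x (d i.castSucc)) ^ p
            + ∑ i ∈ B, Jnorm p (x (d i.succ)) ^ p) := by
            rw [← Finset.mul_sum, Finset.sum_add_distrib]
        _ ≤ (2 : ENNReal) ^ (p - 1) * (T + T) :=
            mul_le_mul_right (add_le_add hsum1 hsum2) _
        _ = (2 : ENNReal) ^ p * T := h2p
    calc ∑ i : Fin (N + 1), t i
        = _ := hsplit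
      _ ≤ T + (2 : ENNReal) ^ p * T := add_le_add hwithin hcross
      _ = ((2 : ENNReal) ^ p + 1) * T := by rw [add_mul, one_mul, add_comm]
  -- conclude
  have hJle : Jnorm p S ≤ (((2 : ENNReal) ^ p + 1) * T) ^ (1 / p) := by
    refine iSup_le fun N => iSup_le fun f => ?_
    have hnn : (0 : ℝ) ≤ ∑ i : Fin (N + 1), |S (f.1 i.succ) - S (f.1 i.castSucc)| ^ p :=
      Finset.sum_nonneg fun i _ => Real.rpow_nonneg (abs_nonneg _) p
    rw [← ENNReal.ofReal_rpow_of_nonneg hnn (by positivity)]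
    exact ENNReal.rpow_le_rpow (key N f.1 f.2) (by positivity)
  calc Jnorm p S ^ p ≤ ((((2 : ENNReal) ^ p + 1) * T) ^ (1 / p)) ^ p :=
        ENNReal.rpow_le_rpow hJle hp0.le
    _ = (((2 : ENNReal) ^ p + 1) * T) ^ ((1 / p) * p) := by rw [ENNReal.rpow_mul]
    _ = ((2 : ENNReal) ^ p + 1) * T := by
        rw [one_div_mul_cancel hp0.ne', ENNReal.rpow_one]
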